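/- Let μ be a Radon measure on ℝ^d with μ(B(x,r)) ≤ C₀ r^n, and let N be the maximal operator Nf(x) = sup_{0<r<R} (1 + ‖φ_{x,r,R}‖_{L¹(μ)})^{−1} ∫ φ_{x,r,R} |f| dμ, where φ_{x,r,R}(y) equals r^{−n} for |x−y| ≤ r, |x−y|^{−n} for r ≤ |x−y| ≤ R, and 0 for |x−y| > R. Then for every λ ≥ 1 there is a constant C(λ) such that Nf(x) ≤ C(λ) M_λ f(x) for all f ∈ L¹_loc(μ) and x ∈ supp(μ), where M_λ f(x) = sup_{r>0} μ(B(x,λr))^{−1} ∫_{B(x,r)} |f| dμ. -/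

import Mathlib

open MeasureTheory Metric Set ENNReal

noncomputable section

/-- The support of a measure on a metric space. -/
def msupport {X : Type*} [MeasurableSpace X] [PseudoMetricSpace X]
    (μ : Measure X) : Set X := {x | ∀ r : ℝ, 0 < r → 0 < μ (Metric.ball x r)}

/-- The truncated kernel φ_{x,r,R}. -/
def phi {d : ℕ} (n : ℝ) (x : EuclideanSpace ℝ (Fin d)) (r R : ℝ)
    (y : EuclideanSpace ℝ (Fin d)) : ℝ :=
  if dist y x ≤ r then r ^ (-n)
  else if dist y x ≤ R then dist y x ^ (-n)
  else 0

/-- The maximal operator N. -/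
def Nmax {d : ℕ} (n : ℝ) (μ : Measure (EuclideanSpace ℝ (Fin d)))
    (f : EuclideanSpace ℝ (Fin d) → ℝ) (x : EuclideanSpace ℝ (Fin d)) : ℝ≥0∞ :=
  ⨆ (r : ℝ) (R : ℝ) (_ : 0 < r) (_ : r < R),
    (∫⁻ y, ENNReal.ofReal (phi n x r R y * |f y|) ∂μ) /
      (1 + ∫⁻ y, ENNReal.ofReal (phi n x r R y) ∂μ)

/-- The λ-dilated centered Hardy–Littlewood maximal operator M_λ. -/
def Mlam {d : ℕ} (μ : Measure (EuclideanSpace ℝ (Fin d))) (lam : ℝ)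
    (f : EuclideanSpace ℝ (Fin d) → ℝ) (x : EuclideanSpace ℝ (Fin d)) : ℝ≥0∞ :=
  ⨆ (r : ℝ) (_ : 0 < r),
    (∫⁻ y in Metric.closedBall x r, ENNReal.ofReal |f y| ∂μ) /
      μ (Metric.closedBall x (lam * r))

theorem stmt8 {d : ℕ} (n C₀ : ℝ) (hn : 0 < n) (hnd : n ≤ d) (hC₀ : 0 < C₀)
    (μ : Measure (EuclideanSpace ℝ (Fin d))) [Measure.Regular μ]
    (hgrowth : ∀ (x : EuclideanSpace ℝ (Fin d)) (r : ℝ), 0 < r →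
      μ (Metric.closedBall x r) ≤ ENNReal.ofReal (C₀ * r ^ n))
    (lam : ℝ) (hlam : 1 ≤ lam) :
    ∃ C : ℝ, 0 < C ∧ ∀ f : EuclideanSpace ℝ (Fin d) → ℝ,
      LocallyIntegrable f μ → ∀ x ∈ msupport μ,
        Nmax n μ f x ≤ ENNReal.ofReal C * Mlam μ lam f x := by
  classical
  set q : ℝ := (2:ℝ) ^ (-n) with hqdef
  have hq0 : 0 < q := Real.rpow_pos_of_pos two_pos _
  have hq1 : q < 1 := Real.rpow_lt_one_of_one_lt_of_neg one_lt_two (neg_lt_zero.mpr hn)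
  have h1q : 0 < 1 - q := by linarith
  obtain ⟨L, hL⟩ : ∃ L : ℕ, lam ≤ 2 ^ L := by
    obtain ⟨L, hL⟩ := pow_unbounded_of_one_lt (R := ℝ) lam one_lt_two
    exact ⟨L, hL.le⟩
  have hCpos : (0:ℝ) < (q⁻¹)^(L+1) * ((1-q)⁻¹ + (L+1) * C₀) := by
    have h1 : (0:ℝ) < (1-q)⁻¹ := inv_pos.mpr h1q
    have h2 : (0:ℝ) < ((L:ℝ)+1) * C₀ := by positivity
    exact mul_pos (pow_pos (inv_pos.mpr hq0) _) (by linarith)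
  refine ⟨(q⁻¹)^(L+1) * ((1-q)⁻¹ + (L+1) * C₀), hCpos, ?_⟩
  set Creal : ℝ := (q⁻¹)^(L+1) * ((1-q)⁻¹ + (L+1) * C₀) with hCdef
  intro f hf x hx
  set T := Mlam μ lam f x with hT
  by_cases hTtop : T = ⊤
  · rw [hTtop, ENNReal.mul_top (ENNReal.ofReal_pos.mpr hCpos).ne']
    exact le_top
  have hmf : AEMeasurable (fun y => ENNReal.ofReal |f y|) μ := by
    have h1 : AEMeasurable (fun y => |f y|) μ := by
      have h0 := hf.aestronglyMeasurable.aemeasurable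
      simpa [Real.norm_eq_abs] using h0.norm
    exact ENNReal.measurable_ofReal.comp_aemeasurable h1
  have hm_ne_top : ∀ s : ℝ, 0 < s → μ (Metric.closedBall x s) ≠ ⊤ := fun s hs =>
    ne_top_of_le_ne_top ENNReal.ofReal_ne_top (hgrowth x s hs)
  have hFT : ∀ s : ℝ, 0 < s →
      (∫⁻ y in Metric.closedBall x s, ENNReal.ofReal |f y| ∂μ)
        ≤ T * μ (Metric.closedBall x (lam * s)) := by
    intro s hs
    have hle : (∫⁻ y in Metric.closedBall x s, ENNReal.ofReal |f y| ∂μ) /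
        μ (Metric.closedBall x (lam * s)) ≤ T := by
      rw [hT, Mlam]
      exact le_iSup₂ (f := fun (s : ℝ) (_ : 0 < s) =>
        (∫⁻ y in Metric.closedBall x s, ENNReal.ofReal |f y| ∂μ) /
          μ (Metric.closedBall x (lam * s))) s hs
    have hlams : 0 < lam * s := mul_pos (lt_of_lt_of_le one_pos hlam) hs
    by_cases hms : μ (Metric.closedBall x (lam * s)) = 0
    · by_cases hFs : (∫⁻ y in Metric.closedBall x s, ENNReal.ofReal |f y| ∂μ) = 0
      · rw [hFs]; exact zero_le
      · exfalso
        rw [hms, ENNReal.div_zero hFs] at hle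
        exact hTtop (top_le_iff.mp hle)
    · exact (ENNReal.div_le_iff_le_mul (Or.inl hms) (Or.inl (hm_ne_top _ hlams))).mp hle
  rw [Nmax]
  refine iSup_le fun r => iSup_le fun R => iSup_le fun hr => iSup_le fun hrR => ?_
  have hR : 0 < R := hr.trans hrR
  -- choose K minimal with R ≤ 2^K r
  have hex : ∃ k : ℕ, R ≤ 2 ^ k * r := by
    obtain ⟨k, hk⟩ := pow_unbounded_of_one_lt (R := ℝ) (R / r) one_lt_two
    exact ⟨k, by rw [div_lt_iff₀ hr] at hk; exact hk.le⟩
  set K := Nat.find hex with hKdef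
  have hKspec : R ≤ 2 ^ K * r := Nat.find_spec hex
  have hKmin : ∀ j, j < K → 2 ^ j * r < R := fun j hj => not_le.mp (Nat.find_min hex hj)
  have hK1 : 1 ≤ K := by
    by_contra h
    push_neg at h
    have hK0 : K = 0 := by omega
    rw [hK0, pow_zero, one_mul] at hKspec
    exact absurd hKspec (not_le.mpr hrR)
  have hBpos : ∀ j : ℕ, (0:ℝ) < 2 ^ j * r := fun j => by positivity
  have hpow : ∀ j : ℕ, ((2:ℝ) ^ j * r) ^ (-n) = q ^ j * r ^ (-n) := by
    intro j
    rw [Real.mul_rpow (by positivity) hr.le]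
    congr 1
    rw [← Real.rpow_natCast (2:ℝ) j, ← Real.rpow_natCast q j, hqdef,
      ← Real.rpow_mul (by norm_num), ← Real.rpow_mul (by norm_num)]
    congr 1
    ring
  have hphi0 : ∀ y, 0 ≤ phi n x r R y := by
    intro y
    unfold phi
    split_ifs with h1 h2
    · exact Real.rpow_nonneg hr.le _
    · exact Real.rpow_nonneg dist_nonneg _
    · exact le_refl 0
  have hanti : ∀ a b : ℝ, 0 < a → a ≤ b → b ^ (-n) ≤ a ^ (-n) := by
    intro a b ha hab
    rw [Real.rpow_neg ha.le, Real.rpow_neg (ha.trans_le hab).le]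
    exact inv_anti₀ (Real.rpow_pos_of_pos ha n) (Real.rpow_le_rpow ha.le hab hn.le)
  have hgeom : ∀ M : ℕ, ∑ i ∈ Finset.range M, q ^ i ≤ (1 - q)⁻¹ := by
    intro M
    have hs : Summable (fun i : ℕ => q ^ i) := summable_geometric_of_lt_one hq0.le hq1
    calc ∑ i ∈ Finset.range M, q ^ i ≤ ∑' i : ℕ, q ^ i :=
          Summable.sum_le_tsum _ (fun i _ => by positivity) hs
      _ = (1-q)⁻¹ := tsum_geometric_of_lt_one hq0.le hq1
  have hterm : ∀ (j : ℕ) y, 0 ≤ q ^ j * r ^ (-n) *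
      Set.indicator (Metric.closedBall x (2^j*r)) (fun _ => (1:ℝ)) y := by
    intro j y
    have h1 : (0:ℝ) ≤ Set.indicator (Metric.closedBall x (2^j*r)) (fun _ => (1:ℝ)) y :=
      Set.indicator_nonneg (fun _ _ => zero_le_one) _
    exact mul_nonneg (mul_nonneg (by positivity) (Real.rpow_nonneg hr.le _)) h1
  -- pointwise upper bound for the kernel
  have PW1 : ∀ y, phi n x r R y ≤ q⁻¹ * ∑ j ∈ Finset.range (K+1),
      q ^ j * r ^ (-n) * Set.indicator (Metric.closedBall x (2^j*r)) (fun _ => (1:ℝ)) y := by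
    intro y
    have hsum0 : 0 ≤ ∑ j ∈ Finset.range (K+1),
        q ^ j * r ^ (-n) * Set.indicator (Metric.closedBall x (2^j*r)) (fun _ => (1:ℝ)) y :=
      Finset.sum_nonneg fun j _ => hterm j y
    have hqinv1 : 1 ≤ q⁻¹ := by
      have := inv_anti₀ hq0 hq1.le
      simpa using this
    unfold phi
    split_ifs with hd1 hd2
    · have hmem : y ∈ Metric.closedBall x (2^0 * r) := by
        simpa [Metric.mem_closedBall] using hd1
      calc r ^ (-n) = q ^ 0 * r ^ (-n) *
            Set.indicator (Metric.closedBall x (2^0*r)) (fun _ => (1:ℝ)) y := by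
            rw [Set.indicator_of_mem hmem]; ring
        _ ≤ ∑ j ∈ Finset.range (K+1), q ^ j * r ^ (-n) *
              Set.indicator (Metric.closedBall x (2^j*r)) (fun _ => (1:ℝ)) y :=
            Finset.single_le_sum (fun j _ => hterm j y) (Finset.mem_range.mpr (Nat.succ_pos K))
        _ = 1 * _ := (one_mul _).symm
        _ ≤ q⁻¹ * _ := mul_le_mul_of_nonneg_right hqinv1 hsum0
    · push_neg at hd1
      have hexk : ∃ k : ℕ, dist y x ≤ 2 ^ (k+1) * r := by
        refine ⟨K - 1, ?_⟩
        have hKK : K - 1 + 1 = K := Nat.succ_pred_eq_of_pos hK1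
        rw [hKK]; exact hd2.trans hKspec
      set k := Nat.find hexk with hkdef
      have hk2 : dist y x ≤ 2 ^ (k+1) * r := Nat.find_spec hexk
      have hk1 : 2 ^ k * r < dist y x := by
        rcases Nat.eq_zero_or_pos k with h0 | hpos
        · rw [h0]; simpa using hd1
        · have hm : ¬ dist y x ≤ 2 ^ (k - 1 + 1) * r := Nat.find_min hexk (by omega)
          rw [Nat.sub_add_cancel hpos] at hm
          exact not_le.mp hm
      have hkK : k + 1 < K + 1 := by
        have hkle : k ≤ K - 1 := Nat.find_le (by
          have hKK : K - 1 + 1 = K := Nat.succ_pred_eq_of_pos hK1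
          rw [hKK]; exact hd2.trans hKspec)
        omega
      have hmem : y ∈ Metric.closedBall x (2^(k+1)*r) := Metric.mem_closedBall.mpr hk2
      calc dist y x ^ (-n) ≤ ((2:ℝ)^k * r) ^ (-n) := hanti _ _ (hBpos k) hk1.le
        _ = q ^ k * r ^ (-n) := hpow k
        _ = q⁻¹ * (q ^ (k+1) * r ^ (-n) *
              Set.indicator (Metric.closedBall x (2^(k+1)*r)) (fun _ => (1:ℝ)) y) := by
            rw [Set.indicator_of_mem hmem, mul_one, pow_succ]
            field_simp
        _ ≤ q⁻¹ * ∑ j ∈ Finset.range (K+1), q ^ j * r ^ (-n) *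
              Set.indicator (Metric.closedBall x (2^j*r)) (fun _ => (1:ℝ)) y :=
            mul_le_mul_of_nonneg_left
              (Finset.single_le_sum (fun j _ => hterm j y) (Finset.mem_range.mpr hkK))
              (inv_nonneg.mpr hq0.le)
    · exact mul_nonneg (inv_nonneg.mpr hq0.le) hsum0
  -- pointwise lower bound for the kernel
  have PW2 : ∀ y, (∑ j ∈ Finset.range K, q ^ j * r ^ (-n) *
      Set.indicator (Metric.closedBall x (2^j*r)) (fun _ => (1:ℝ)) y)
      ≤ (1 - q)⁻¹ * phi n x r R y := by
    intro y
    by_cases hd1 : dist y x ≤ r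
    · have hphiv : phi n x r R y = r ^ (-n) := by unfold phi; rw [if_pos hd1]
      have hmem : ∀ j : ℕ, y ∈ Metric.closedBall x (2^j * r) := by
        intro j
        rw [Metric.mem_closedBall]
        calc dist y x ≤ r := hd1
          _ ≤ 2 ^ j * r := le_mul_of_one_le_left hr.le (one_le_pow₀ one_le_two)
      calc (∑ j ∈ Finset.range K, q ^ j * r ^ (-n) *
            Set.indicator (Metric.closedBall x (2^j*r)) (fun _ => (1:ℝ)) y)
          = (∑ j ∈ Finset.range K, q ^ j) * r ^ (-n) := by
            rw [Finset.sum_mul]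
            exact Finset.sum_congr rfl fun j _ => by
              rw [Set.indicator_of_mem (hmem j), mul_one]
        _ ≤ (1-q)⁻¹ * r ^ (-n) :=
            mul_le_mul_of_nonneg_right (hgeom K) (Real.rpow_nonneg hr.le _)
        _ = (1-q)⁻¹ * phi n x r R y := by rw [hphiv]
    · push_neg at hd1
      by_cases hex3 : ∃ j : ℕ, j < K ∧ dist y x ≤ 2 ^ j * r
      · set j₀ := Nat.find hex3 with hj₀def
        obtain ⟨hj₀K, hj₀le⟩ : j₀ < K ∧ dist y x ≤ 2 ^ j₀ * r := Nat.find_spec hex3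
        have hj₀min : ∀ i, i < j₀ → ¬ dist y x ≤ 2 ^ i * r := by
          intro i hi hle
          exact Nat.find_min hex3 hi ⟨hi.trans hj₀K, hle⟩
        have htR : dist y x < R := hj₀le.trans_lt (hKmin j₀ hj₀K)
        have hphiv : phi n x r R y = dist y x ^ (-n) := by
          unfold phi; rw [if_neg (not_le.mpr hd1), if_pos htR.le]
        calc (∑ j ∈ Finset.range K, q ^ j * r ^ (-n) *
              Set.indicator (Metric.closedBall x (2^j*r)) (fun _ => (1:ℝ)) y)
            = ∑ j ∈ Finset.Ico j₀ K, q ^ j * r ^ (-n) *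
              Set.indicator (Metric.closedBall x (2^j*r)) (fun _ => (1:ℝ)) y := by
              refine (Finset.sum_subset ?_ ?_).symm
              · intro i hi
                rw [Finset.mem_Ico] at hi
                exact Finset.mem_range.mpr hi.2
              · intro i hi hni
                rw [Finset.mem_range] at hi
                rw [Finset.mem_Ico] at hni
                have hij : i < j₀ := by omega
                rw [Set.indicator_of_notMem (fun hmem => hj₀min i hij
                  (Metric.mem_closedBall.mp hmem)), mul_zero]
          _ ≤ ∑ j ∈ Finset.Ico j₀ K, q ^ j * r ^ (-n) := by
              refine Finset.sum_le_sum fun i _ => ?_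
              have h1 : Set.indicator (Metric.closedBall x (2^i*r)) (fun _ => (1:ℝ)) y ≤ 1 := by
                by_cases hmem : y ∈ Metric.closedBall x (2^i*r) <;> simp [hmem]
              calc q ^ i * r ^ (-n) *
                    Set.indicator (Metric.closedBall x (2^i*r)) (fun _ => (1:ℝ)) y
                  ≤ q ^ i * r ^ (-n) * 1 := mul_le_mul_of_nonneg_left h1
                    (mul_nonneg (by positivity) (Real.rpow_nonneg hr.le _))
                _ = q ^ i * r ^ (-n) := mul_one _
          _ = (∑ j ∈ Finset.Ico j₀ K, q ^ j) * r ^ (-n) := by rw [Finset.sum_mul]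
          _ ≤ (q ^ j₀ * (1-q)⁻¹) * r ^ (-n) := by
              refine mul_le_mul_of_nonneg_right ?_ (Real.rpow_nonneg hr.le _)
              rw [Finset.sum_Ico_eq_sum_range]
              calc ∑ i ∈ Finset.range (K - j₀), q ^ (j₀ + i)
                  = q ^ j₀ * ∑ i ∈ Finset.range (K - j₀), q ^ i := by
                    rw [Finset.mul_sum]
                    exact Finset.sum_congr rfl fun i _ => pow_add q j₀ i
                _ ≤ q ^ j₀ * (1-q)⁻¹ :=
                    mul_le_mul_of_nonneg_left (hgeom _) (by positivity)
          _ = (1-q)⁻¹ * (((2:ℝ) ^ j₀ * r) ^ (-n)) := by rw [hpow]; ring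
          _ ≤ (1-q)⁻¹ * (dist y x ^ (-n)) := mul_le_mul_of_nonneg_left
              (hanti _ _ (hr.trans hd1) hj₀le) (by positivity)
          _ = (1-q)⁻¹ * phi n x r R y := by rw [hphiv]
      · push_neg at hex3
        have hz : (∑ j ∈ Finset.range K, q ^ j * r ^ (-n) *
            Set.indicator (Metric.closedBall x (2^j*r)) (fun _ => (1:ℝ)) y) = 0 := by
          refine Finset.sum_eq_zero fun j hj => ?_
          rw [Set.indicator_of_notMem (fun hmem => ?_), mul_zero]
          exact absurd (Metric.mem_closedBall.mp hmem)
            (not_le.mpr (hex3 j (Finset.mem_range.mp hj)))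
        rw [hz]
        exact mul_nonneg (by positivity) (hphi0 y)
  -- integrated numerator bound
  have key_pt : ∀ y, ENNReal.ofReal (phi n x r R y * |f y|) ≤
      ∑ j ∈ Finset.range (K+1), (Metric.closedBall x (2^j*r)).indicator
        (fun z => ENNReal.ofReal (q⁻¹ * (q ^ j * r ^ (-n))) * ENNReal.ofReal |f z|) y := by
    intro y
    have e1 : phi n x r R y * |f y| ≤ ∑ j ∈ Finset.range (K+1),
        (q⁻¹ * (q ^ j * r ^ (-n) *
          Set.indicator (Metric.closedBall x (2^j*r)) (fun _ => (1:ℝ)) y)) * |f y| := by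
      rw [← Finset.sum_mul, ← Finset.mul_sum]
      exact mul_le_mul_of_nonneg_right (PW1 y) (abs_nonneg _)
    calc ENNReal.ofReal (phi n x r R y * |f y|)
        ≤ ENNReal.ofReal (∑ j ∈ Finset.range (K+1),
            (q⁻¹ * (q ^ j * r ^ (-n) *
              Set.indicator (Metric.closedBall x (2^j*r)) (fun _ => (1:ℝ)) y)) * |f y|) :=
          ENNReal.ofReal_le_ofReal e1
      _ = ∑ j ∈ Finset.range (K+1), ENNReal.ofReal ((q⁻¹ * (q ^ j * r ^ (-n) *
            Set.indicator (Metric.closedBall x (2^j*r)) (fun _ => (1:ℝ)) y)) * |f y|) :=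
          ENNReal.ofReal_sum_of_nonneg fun j _ =>
            mul_nonneg (mul_nonneg (inv_nonneg.mpr hq0.le) (hterm j y)) (abs_nonneg _)
      _ ≤ ∑ j ∈ Finset.range (K+1), (Metric.closedBall x (2^j*r)).indicator
            (fun z => ENNReal.ofReal (q⁻¹ * (q ^ j * r ^ (-n))) * ENNReal.ofReal |f z|) y := by
          refine Finset.sum_le_sum fun j _ => ?_
          by_cases hy : y ∈ Metric.closedBall x (2^j*r)
          · rw [Set.indicator_of_mem hy, Set.indicator_of_mem hy, mul_one,
              ENNReal.ofReal_mul (by positivity)]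
          · simp [Set.indicator_of_notMem hy]
  have hnum : (∫⁻ y, ENNReal.ofReal (phi n x r R y * |f y|) ∂μ) ≤
      ∑ j ∈ Finset.range (K+1), ENNReal.ofReal (q⁻¹ * (q ^ j * r ^ (-n))) *
        (∫⁻ y in Metric.closedBall x (2^j*r), ENNReal.ofReal |f y| ∂μ) := by
    calc (∫⁻ y, ENNReal.ofReal (phi n x r R y * |f y|) ∂μ)
        ≤ ∫⁻ y, ∑ j ∈ Finset.range (K+1), (Metric.closedBall x (2^j*r)).indicator
            (fun z => ENNReal.ofReal (q⁻¹ * (q ^ j * r ^ (-n))) * ENNReal.ofReal |f z|) y ∂μ :=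
          lintegral_mono key_pt
      _ = ∑ j ∈ Finset.range (K+1), ∫⁻ y, (Metric.closedBall x (2^j*r)).indicator
            (fun z => ENNReal.ofReal (q⁻¹ * (q ^ j * r ^ (-n))) * ENNReal.ofReal |f z|) y ∂μ :=
          lintegral_finset_sum' _ fun j _ =>
            ((aemeasurable_const.mul hmf).indicator measurableSet_closedBall)
      _ = ∑ j ∈ Finset.range (K+1), ENNReal.ofReal (q⁻¹ * (q ^ j * r ^ (-n))) *
            (∫⁻ y in Metric.closedBall x (2^j*r), ENNReal.ofReal |f y| ∂μ) := by
          refine Finset.sum_congr rfl fun j _ => ?_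
          rw [lintegral_indicator measurableSet_closedBall]
          exact lintegral_const_mul' _ _ ENNReal.ofReal_ne_top
  -- denominator lower bound
  have hden : ∑ i ∈ Finset.range K, ENNReal.ofReal (q ^ i * r ^ (-n)) *
      μ (Metric.closedBall x (2^i*r))
      ≤ ENNReal.ofReal ((1 - q)⁻¹) * ∫⁻ y, ENNReal.ofReal (phi n x r R y) ∂μ := by
    have e1 : ∀ i ∈ Finset.range K, ENNReal.ofReal (q ^ i * r ^ (-n)) *
        μ (Metric.closedBall x (2^i*r)) =
        ∫⁻ y, (Metric.closedBall x (2^i*r)).indicator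
          (fun _ => ENNReal.ofReal (q ^ i * r ^ (-n))) y ∂μ :=
      fun i _ => (lintegral_indicator_const measurableSet_closedBall _).symm
    rw [Finset.sum_congr rfl e1,
      ← lintegral_finset_sum _ (fun i _ => measurable_const.indicator measurableSet_closedBall)]
    calc (∫⁻ y, ∑ i ∈ Finset.range K, (Metric.closedBall x (2^i*r)).indicator
          (fun _ => ENNReal.ofReal (q ^ i * r ^ (-n))) y ∂μ)
        ≤ ∫⁻ y, ENNReal.ofReal ((1-q)⁻¹) * ENNReal.ofReal (phi n x r R y) ∂μ := by
          refine lintegral_mono fun y => ?_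
          have e2 : ∑ i ∈ Finset.range K, (Metric.closedBall x (2^i*r)).indicator
              (fun _ => ENNReal.ofReal (q ^ i * r ^ (-n))) y =
              ENNReal.ofReal (∑ i ∈ Finset.range K, q ^ i * r ^ (-n) *
                Set.indicator (Metric.closedBall x (2^i*r)) (fun _ => (1:ℝ)) y) := by
            rw [ENNReal.ofReal_sum_of_nonneg fun i _ => hterm i y]
            refine Finset.sum_congr rfl fun i _ => ?_
            by_cases hy : y ∈ Metric.closedBall x (2^i*r) <;> simp [hy]
          rw [e2, ← ENNReal.ofReal_mul (inv_nonneg.mpr h1q.le)]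
          exact ENNReal.ofReal_le_ofReal (PW2 y)
      _ = ENNReal.ofReal ((1-q)⁻¹) * ∫⁻ y, ENNReal.ofReal (phi n x r R y) ∂μ :=
          lintegral_const_mul' _ _ ENNReal.ofReal_ne_top
  -- growth bound for individual terms
  have hgrow2 : ∀ i : ℕ, ENNReal.ofReal (q ^ i * r ^ (-n)) *
      μ (Metric.closedBall x (2^i*r)) ≤ ENNReal.ofReal C₀ := by
    intro i
    calc ENNReal.ofReal (q ^ i * r ^ (-n)) * μ (Metric.closedBall x (2^i*r))
        ≤ ENNReal.ofReal (q ^ i * r ^ (-n)) * ENNReal.ofReal (C₀ * ((2:ℝ)^i*r) ^ n) :=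
          mul_le_mul_right (hgrowth x _ (hBpos i)) _
      _ = ENNReal.ofReal ((q ^ i * r ^ (-n)) * (C₀ * ((2:ℝ)^i*r) ^ n)) :=
          (ENNReal.ofReal_mul (mul_nonneg (by positivity) (Real.rpow_nonneg hr.le _))).symm
      _ = ENNReal.ofReal C₀ := by
          congr 1
          rw [← hpow i, Real.rpow_neg (hBpos i).le]
          have hne : (((2:ℝ)^i * r) ^ n) ≠ 0 := (Real.rpow_pos_of_pos (hBpos i) n).ne'
          field_simp
  -- per-ball step via the maximal function
  have step1 : ∀ j : ℕ, (∫⁻ y in Metric.closedBall x (2^j*r), ENNReal.ofReal |f y| ∂μ)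
      ≤ T * μ (Metric.closedBall x (2^(j+L)*r)) := by
    intro j
    refine (hFT (2^j*r) (hBpos j)).trans ?_
    refine mul_le_mul_right (measure_mono (Metric.closedBall_subset_closedBall ?_)) T
    rw [pow_add]
    calc lam * (2^j * r) ≤ 2^L * (2^j*r) :=
        mul_le_mul_of_nonneg_right hL (hBpos j).le
      _ = 2^j * 2^L * r := by ring
  have coeff : ∀ j : ℕ, ENNReal.ofReal (q⁻¹ * (q ^ j * r ^ (-n))) =
      ENNReal.ofReal ((q⁻¹)^(L+1)) * ENNReal.ofReal (q ^ (j+L) * r ^ (-n)) := by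
    intro j
    rw [← ENNReal.ofReal_mul (by positivity)]
    congr 1
    have hkey : (q⁻¹)^(L+1) * q ^ (j+L) = q⁻¹ * q ^ j := by
      rw [inv_pow, pow_add, pow_succ]
      field_simp
      ring
    calc q⁻¹ * (q ^ j * r ^ (-n)) = (q⁻¹ * q ^ j) * r ^ (-n) := by ring
      _ = ((q⁻¹)^(L+1) * q ^ (j+L)) * r ^ (-n) := by rw [hkey]
      _ = (q⁻¹)^(L+1) * (q ^ (j+L) * r ^ (-n)) := by ring
  set Φ : ℝ≥0∞ := ∫⁻ y, ENNReal.ofReal (phi n x r R y) ∂μ with hΦdef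
  have key : (∫⁻ y, ENNReal.ofReal (phi n x r R y * |f y|) ∂μ) ≤
      (ENNReal.ofReal Creal * T) * (1 + Φ) := by
    have hsum_le : ∑ j ∈ Finset.range (K+1), ENNReal.ofReal (q ^ (j+L) * r ^ (-n)) *
        μ (Metric.closedBall x (2^(j+L)*r))
        ≤ ENNReal.ofReal ((1-q)⁻¹) * Φ + ((L:ℝ≥0∞)+1) * ENNReal.ofReal C₀ := by
      have h1 : ∑ j ∈ Finset.range (K+1), ENNReal.ofReal (q ^ (j+L) * r ^ (-n)) *
          μ (Metric.closedBall x (2^(j+L)*r))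
          ≤ ∑ i ∈ Finset.range (L+(K+1)), ENNReal.ofReal (q ^ i * r ^ (-n)) *
            μ (Metric.closedBall x (2^i*r)) := by
        conv_rhs => rw [Finset.sum_range_add]
        refine le_trans (le_of_eq (Finset.sum_congr rfl fun j _ => by rw [Nat.add_comm j L])) ?_
        exact le_add_of_nonneg_left zero_le
      refine h1.trans ?_
      have hsplit : L + (K+1) = K + (L+1) := by omega
      rw [hsplit, Finset.sum_range_add]
      refine add_le_add hden ?_
      calc ∑ jj ∈ Finset.range (L+1), ENNReal.ofReal (q ^ (K+jj) * r ^ (-n)) *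
            μ (Metric.closedBall x (2^(K+jj)*r))
          ≤ ∑ _jj ∈ Finset.range (L+1), ENNReal.ofReal C₀ :=
            Finset.sum_le_sum fun jj _ => hgrow2 _
        _ = ((L:ℝ≥0∞)+1) * ENNReal.ofReal C₀ := by
            rw [Finset.sum_const, Finset.card_range, nsmul_eq_mul]
            congr 1
            push_cast
            ring
    calc (∫⁻ y, ENNReal.ofReal (phi n x r R y * |f y|) ∂μ)
        ≤ ∑ j ∈ Finset.range (K+1), ENNReal.ofReal (q⁻¹ * (q ^ j * r ^ (-n))) *
            (∫⁻ y in Metric.closedBall x (2^j*r), ENNReal.ofReal |f y| ∂μ) := hnum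
      _ ≤ ∑ j ∈ Finset.range (K+1), ENNReal.ofReal (q⁻¹ * (q ^ j * r ^ (-n))) *
            (T * μ (Metric.closedBall x (2^(j+L)*r))) :=
          Finset.sum_le_sum fun j _ => mul_le_mul_right (step1 j) _
      _ = T * ENNReal.ofReal ((q⁻¹)^(L+1)) *
            ∑ j ∈ Finset.range (K+1), ENNReal.ofReal (q ^ (j+L) * r ^ (-n)) *
              μ (Metric.closedBall x (2^(j+L)*r)) := by
          rw [Finset.mul_sum]
          refine Finset.sum_congr rfl fun j _ => ?_
          rw [coeff j]
          ring
      _ ≤ T * ENNReal.ofReal ((q⁻¹)^(L+1)) *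
            (ENNReal.ofReal ((1-q)⁻¹) * Φ + ((L:ℝ≥0∞)+1) * ENNReal.ofReal C₀) :=
          mul_le_mul_right hsum_le _
      _ ≤ (ENNReal.ofReal Creal * T) * (1 + Φ) := by
          have hCeq : ENNReal.ofReal Creal = ENNReal.ofReal ((q⁻¹)^(L+1)) *
              (ENNReal.ofReal ((1-q)⁻¹) + ((L:ℝ≥0∞)+1) * ENNReal.ofReal C₀) := by
            rw [hCdef, ENNReal.ofReal_mul (pow_nonneg (inv_nonneg.mpr hq0.le) _),
              ENNReal.ofReal_add (inv_nonneg.mpr h1q.le) (mul_nonneg (by positivity) hC₀.le),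
              ENNReal.ofReal_mul (by positivity : (0:ℝ) ≤ (L:ℝ)+1),
              ENNReal.ofReal_add (by positivity : (0:ℝ) ≤ (L:ℝ)) zero_le_one,
              ENNReal.ofReal_natCast, ENNReal.ofReal_one]
          rw [hCeq]
          have hinner : ENNReal.ofReal ((1-q)⁻¹) * Φ + ((L:ℝ≥0∞)+1) * ENNReal.ofReal C₀
              ≤ (ENNReal.ofReal ((1-q)⁻¹) + ((L:ℝ≥0∞)+1) * ENNReal.ofReal C₀) * (1 + Φ) := by
            calc ENNReal.ofReal ((1-q)⁻¹) * Φ + ((L:ℝ≥0∞)+1) * ENNReal.ofReal C₀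
                ≤ (ENNReal.ofReal ((1-q)⁻¹) + ENNReal.ofReal ((1-q)⁻¹) * Φ) +
                  (((L:ℝ≥0∞)+1) * ENNReal.ofReal C₀ +
                    ((L:ℝ≥0∞)+1) * ENNReal.ofReal C₀ * Φ) :=
                  add_le_add (le_add_of_nonneg_left zero_le)
                    (le_add_of_nonneg_right zero_le)
              _ = (ENNReal.ofReal ((1-q)⁻¹) + ((L:ℝ≥0∞)+1) * ENNReal.ofReal C₀) * (1 + Φ) := by
                  ring
          calc T * ENNReal.ofReal ((q⁻¹)^(L+1)) *
                (ENNReal.ofReal ((1-q)⁻¹) * Φ + ((L:ℝ≥0∞)+1) * ENNReal.ofReal C₀)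
              ≤ T * ENNReal.ofReal ((q⁻¹)^(L+1)) *
                ((ENNReal.ofReal ((1-q)⁻¹) + ((L:ℝ≥0∞)+1) * ENNReal.ofReal C₀) * (1 + Φ)) :=
                mul_le_mul_right hinner _
            _ = (ENNReal.ofReal ((q⁻¹)^(L+1)) *
                  (ENNReal.ofReal ((1-q)⁻¹) + ((L:ℝ≥0∞)+1) * ENNReal.ofReal C₀) * T) * (1 + Φ) := by
                ring
  by_cases hΦtop : Φ = ⊤
  · rw [hΦtop]
    simp [ENNReal.div_top]
  · have h1 : (1:ℝ≥0∞) + Φ ≠ 0 := by simp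
    have h2 : (1:ℝ≥0∞) + Φ ≠ ⊤ := by
      simp [ENNReal.add_eq_top, hΦtop]
    rw [ENNReal.div_le_iff_le_mul (Or.inl h1) (Or.inl h2)]
    exact key
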